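/- Given any path cover of a tree T, the set S formed by choosing from each path either one of its end vertices or a pair of adjacent internal vertices is a zero forcing set of T. -/

import Mathlib

namespace ZF

variable {V : Type*}

/-- The set of vertices forced blue starting from `S`, under the standard color change
rule: a blue vertex with exactly one white neighbor forces that neighbor blue. -/
inductive Forced (G : SimpleGraph V) (S : Set V) : V → Prop
  | init {v : V} : v ∈ S → Forced G S v
  | force {u w : V} : Forced G S u → G.Adj u w →
      (∀ x, G.Adj u x → x ≠ w → Forced G S x) → Forced G S w

/-- `S` is a zero forcing set of `G`. -/
def IsZFS (G : SimpleGraph V) (S : Set V) : Prop := ∀ v, Forced G S v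

/-- `S` is a minimal zero forcing set of `G`. -/
def IsMinimalZFS (G : SimpleGraph V) (S : Set V) : Prop :=
  IsZFS G S ∧ ∀ S' ⊂ S, ¬ IsZFS G S'

/-- The zero forcing number of `G`. -/
noncomputable def zfNum (G : SimpleGraph V) : ℕ :=
  sInf {n | ∃ S : Set V, IsZFS G S ∧ S.ncard = n}

/-- A graph is well-forced if every minimal zero forcing set is minimum. -/
def WellForced (G : SimpleGraph V) : Prop :=
  ∀ S, IsMinimalZFS G S → S.ncard = zfNum G

/-- Degree of a vertex (as the `ncard` of its neighbor set). -/
noncomputable def deg (G : SimpleGraph V) (v : V) : ℕ := (G.neighborSet v).ncard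

end ZF

open ZF SimpleGraph

set_option linter.unusedSectionVars false
set_option linter.unusedVariables false


open SimpleGraph

section TreeAux

variable {V : Type*} [DecidableEq V] {T : SimpleGraph V}

lemma dist_add_of_mem_shortest (hC : T.Connected) {r s z : V} (w : T.Walk r s)
    (hw : w.length = T.dist r s) (hz : z ∈ w.support) :
    T.dist r z + T.dist z s = T.dist r s := by
  have h1 : T.dist r z ≤ (w.takeUntil z hz).length := SimpleGraph.dist_le _
  have h2 : T.dist z s ≤ (w.dropUntil z hz).length := SimpleGraph.dist_le _
  have h3 : (w.takeUntil z hz).length + (w.dropUntil z hz).length = w.length := by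
    rw [← Walk.length_append, Walk.take_spec]
  have h4 : T.dist r s ≤ T.dist r z + T.dist z s := hC.dist_triangle
  omega

lemma mem_shortest_cases (hC : T.Connected) {r s z : V} (w : T.Walk r s)
    (hw : w.length = T.dist r s) (hz : z ∈ w.support) :
    T.dist r z < T.dist r s ∨ z = s := by
  have h := dist_add_of_mem_shortest hC w hw hz
  rcases Nat.lt_or_ge (T.dist r z) (T.dist r s) with h' | h'
  · exact Or.inl h'
  · right
    have : T.dist z s = 0 := by omega
    exact (hC.dist_eq_zero_iff).mp this

lemma tree_path_eq (hT : T.IsTree) {u v : V} (w₁ w₂ : T.Walk u v)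
    (h₁ : w₁.IsPath) (h₂ : w₂.IsPath) : w₁ = w₂ := by
  have := hT.2.path_unique ⟨w₁, h₁⟩ ⟨w₂, h₂⟩
  exact congrArg Subtype.val this

end TreeAux
set_option linter.unusedSectionVars false

section ChainAux

variable {V : Type*} [DecidableEq V] {T : SimpleGraph V} {m : ℕ} {len : Fin m → ℕ}
  {p : Fin m → ℕ → V}

/-- Walk along a covering path from index `j` to index `j + d`. -/
def chainW (hchain : ∀ i j, j + 1 < len i → T.Adj (p i j) (p i (j + 1))) (i : Fin m) :
    ∀ (d j : ℕ), j + d < len i → T.Walk (p i j) (p i (j + d))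
  | 0, _, _ => Walk.nil
  | d+1, j, h =>
      Walk.cons (hchain i j (by omega))
        ((chainW hchain i d (j+1) (by omega)).copy rfl (congrArg (p i) (by omega)))

lemma chainW_length (hchain : ∀ i j, j + 1 < len i → T.Adj (p i j) (p i (j + 1)))
    (i : Fin m) : ∀ (d j : ℕ) (h : j + d < len i), (chainW hchain i d j h).length = d
  | 0, _, _ => rfl
  | d+1, j, h => by
      simp only [chainW, Walk.length_cons, Walk.length_copy]
      rw [chainW_length hchain i d (j+1)]

lemma chainW_support (hchain : ∀ i j, j + 1 < len i → T.Adj (p i j) (p i (j + 1)))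
    (i : Fin m) : ∀ (d j : ℕ) (h : j + d < len i),
    ∀ z ∈ (chainW hchain i d j h).support, ∃ t, j ≤ t ∧ t ≤ j + d ∧ z = p i t
  | 0, j, h => by
      intro z hz
      simp only [chainW, Walk.support_nil, List.mem_singleton] at hz
      exact ⟨j, le_refl _, by omega, hz⟩
  | d+1, j, h => by
      intro z hz
      simp only [chainW, Walk.support_cons, List.mem_cons, Walk.support_copy] at hz
      rcases hz with rfl | hz
      · exact ⟨j, le_refl _, by omega, rfl⟩
      · obtain ⟨t, ht1, ht2, rfl⟩ := chainW_support hchain i d (j+1) (by omega) z hz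
        exact ⟨t, by omega, by omega, rfl⟩

lemma chainW_isPath (hchain : ∀ i j, j + 1 < len i → T.Adj (p i j) (p i (j + 1)))
    (hinj : ∀ i j i' j', j < len i → j' < len i' → p i j = p i' j' → i = i' ∧ j = j')
    (i : Fin m) : ∀ (d j : ℕ) (h : j + d < len i), (chainW hchain i d j h).IsPath
  | 0, _, _ => Walk.IsPath.nil
  | d+1, j, h => by
      simp only [chainW]
      rw [Walk.cons_isPath_iff]
      constructor
      · rw [Walk.isPath_copy]
        exact chainW_isPath hchain hinj i d (j+1) (by omega)
      · intro hmem
        rw [Walk.support_copy] at hmem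
        obtain ⟨t, ht1, ht2, he⟩ := chainW_support hchain i d (j+1) (by omega) _ hmem
        have := (hinj i j i t (by omega) (by omega) he).2
        omega

/-- Walk between two indices on a covering path. -/
def chainBetween (hchain : ∀ i j, j + 1 < len i → T.Adj (p i j) (p i (j + 1))) (i : Fin m)
    (j j' : ℕ) (hj : j < len i) (hj' : j' < len i) : T.Walk (p i j) (p i j') :=
  if h : j ≤ j' then
    (chainW hchain i (j' - j) j (by omega)).copy rfl (congrArg (p i) (by omega))
  else
    ((chainW hchain i (j - j') j' (by omega)).copy rfl (congrArg (p i) (by omega))).reverse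

lemma chainBetween_support (hchain : ∀ i j, j + 1 < len i → T.Adj (p i j) (p i (j + 1)))
    (i : Fin m) (j j' : ℕ) (hj : j < len i) (hj' : j' < len i) :
    ∀ z ∈ (chainBetween hchain i j j' hj hj').support, ∃ t, t < len i ∧ z = p i t := by
  intro z hz
  unfold chainBetween at hz
  split at hz
  · rw [Walk.support_copy] at hz
    obtain ⟨t, _, ht2, rfl⟩ := chainW_support hchain i (j' - j) j (by omega) z hz
    exact ⟨t, by omega, rfl⟩
  · rw [Walk.support_reverse, List.mem_reverse, Walk.support_copy] at hz
    obtain ⟨t, _, ht2, rfl⟩ := chainW_support hchain i (j - j') j' (by omega) z hz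
    exact ⟨t, by omega, rfl⟩

lemma chainBetween_isPath (hchain : ∀ i j, j + 1 < len i → T.Adj (p i j) (p i (j + 1)))
    (hinj : ∀ i j i' j', j < len i → j' < len i' → p i j = p i' j' → i = i' ∧ j = j')
    (i : Fin m) (j j' : ℕ) (hj : j < len i) (hj' : j' < len i) :
    (chainBetween hchain i j j' hj hj').IsPath := by
  unfold chainBetween
  split
  · rw [Walk.isPath_copy]
    exact chainW_isPath hchain hinj i _ _ _
  · rw [Walk.isPath_reverse_iff, Walk.isPath_copy]
    exact chainW_isPath hchain hinj i _ _ _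

lemma chainBetween_length (hchain : ∀ i j, j + 1 < len i → T.Adj (p i j) (p i (j + 1)))
    (i : Fin m) (j j' : ℕ) (hj : j < len i) (hj' : j' < len i) :
    (chainBetween hchain i j j' hj hj').length = max j j' - min j j' := by
  unfold chainBetween
  split
  · rw [Walk.length_copy, chainW_length]
    omega
  · rw [Walk.length_reverse, Walk.length_copy, chainW_length]
    omega

end ChainAux

section Cover

variable {V : Type*} [DecidableEq V] {T : SimpleGraph V} {m : ℕ} {len : Fin m → ℕ}
  {p : Fin m → ℕ → V}

/-- The vertex set of the `i`-th covering path. -/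
def PVx (p : Fin m → ℕ → V) (len : Fin m → ℕ) (i : Fin m) : Set V :=
  {v | ∃ j, j < len i ∧ p i j = v}

/-- The union of the vertex sets of the paths indexed by `A`. -/
def UAx (p : Fin m → ℕ → V) (len : Fin m → ℕ) (A : Finset (Fin m)) : Set V :=
  {v | ∃ i ∈ A, v ∈ PVx p len i}

lemma no_chord (hT : T.IsTree)
    (hchain : ∀ i j, j + 1 < len i → T.Adj (p i j) (p i (j + 1)))
    (hinj : ∀ i j i' j', j < len i → j' < len i' → p i j = p i' j' → i = i' ∧ j = j')
    {i : Fin m} {j j' : ℕ} (hjj : j < j') (hj' : j' < len i)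
    (hadj : T.Adj (p i j) (p i j')) : j' = j + 1 := by
  by_contra hne
  have h2 : j + 2 ≤ j' := by omega
  have w1 : T.Walk (p i j) (p i j') :=
    (chainW hchain i (j' - j) j (by omega)).copy rfl (congrArg (p i) (by omega))
  have hw1 : ((chainW hchain i (j' - j) j (by omega)).copy rfl
      (congrArg (p i) (by omega : j + (j' - j) = j'))).IsPath := by
    rw [Walk.isPath_copy]; exact chainW_isPath hchain hinj i _ _ _
  have hw2 : (Walk.cons hadj Walk.nil).IsPath := by
    rw [Walk.cons_isPath_iff]
    exact ⟨Walk.IsPath.nil, by simp [hadj.ne]⟩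
  have heq := tree_path_eq hT _ _ hw1 hw2
  have hlen1 := congrArg Walk.length heq
  rw [Walk.length_copy, chainW_length] at hlen1
  simp only [Walk.length_cons, Walk.length_nil] at hlen1
  omega

lemma adj_indices (hT : T.IsTree)
    (hchain : ∀ i j, j + 1 < len i → T.Adj (p i j) (p i (j + 1)))
    (hinj : ∀ i j i' j', j < len i → j' < len i' → p i j = p i' j' → i = i' ∧ j = j')
    {i : Fin m} {j j' : ℕ} (hj : j < len i) (hj' : j' < len i)
    (hadj : T.Adj (p i j) (p i j')) : j' = j + 1 ∨ j = j' + 1 := by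
  have hne : j ≠ j' := fun h => hadj.ne (congrArg (p i) h)
  rcases Nat.lt_or_ge j j' with h | h
  · exact Or.inl (no_chord hT hchain hinj h hj' hadj)
  · exact Or.inr (no_chord hT hchain hinj (by omega) hj hadj.symm)

end Cover
section Prop1

variable {V : Type*} [DecidableEq V] {T : SimpleGraph V} {m : ℕ} {len : Fin m → ℕ}
  {p : Fin m → ℕ → V}

lemma propagation (hT : T.IsTree) (hlen : ∀ i, 1 ≤ len i)
    (hchain : ∀ i j, j + 1 < len i → T.Adj (p i j) (p i (j + 1)))
    (hinj : ∀ i j i' j', j < len i → j' < len i' → p i j = p i' j' → i = i' ∧ j = j')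
    (W : Set V) (A : Finset (Fin m)) (i : Fin m) (hiA : i ∈ A)
    (fort : ∀ v, v ∈ UAx p len A → v ∉ W → ∀ w ∈ W, T.Adj v w →
      ∃ w', w' ∈ W ∧ w' ≠ w ∧ T.Adj v w')
    (Hext : ∀ j, j < len i → ∀ y, T.Adj (p i j) y → (∀ j', j' < len i → y ≠ p i j') → y ∉ W)
    (pick : Fin m → Set V)
    (hpicki : pick i = {p i 0} ∨ pick i = {p i (len i - 1)} ∨
      ∃ j, 1 ≤ j ∧ j + 1 ≤ len i - 2 ∧ pick i = {p i j, p i (j + 1)})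
    (hpickW : ∀ s ∈ pick i, s ∉ W) :
    ∀ j, j < len i → p i j ∉ W := by
  -- the two one-step propagation principles
  have step : ∀ j j₂, j < len i → j₂ < len i → (j₂ = j + 1 ∨ j = j₂ + 1) →
      p i j ∉ W → (∀ j₀, j₀ < len i → (j₀ = j + 1 ∨ j = j₀ + 1) → j₀ ≠ j₂ → p i j₀ ∉ W) →
      p i j₂ ∉ W := by
    intro j j₂ hj hj₂ hadjidx hjW hside hcontra
    have hadj : T.Adj (p i j) (p i j₂) := by
      rcases hadjidx with rfl | h
      · exact hchain i j hj₂
      · subst h; exact (hchain i j₂ hj).symm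
    obtain ⟨w', hw'W, hw'ne, hw'adj⟩ :=
      fort (p i j) ⟨i, hiA, j, hj, rfl⟩ hjW (p i j₂) hcontra hadj
    by_cases hcase : ∃ j', j' < len i ∧ w' = p i j'
    · obtain ⟨j', hj', rfl⟩ := hcase
      have hidx := adj_indices hT hchain hinj hj hj' hw'adj
      have : j' ≠ j₂ := fun h => hw'ne (congrArg (p i) h)
      exact hside j' hj' hidx this hw'W
    · push_neg at hcase
      exact Hext j hj w' hw'adj (fun j' h => hcase j' h) hw'W
  have step_up : ∀ j, j + 1 < len i → p i j ∉ W → (j = 0 ∨ p i (j - 1) ∉ W) →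
      p i (j + 1) ∉ W := by
    intro j hj hjW hprev
    refine step j (j+1) (by omega) hj (Or.inl rfl) hjW ?_
    intro j₀ hj₀ hidx hne
    have : j₀ = j - 1 ∧ 1 ≤ j := by omega
    rcases hprev with h0 | hW
    · omega
    · rw [this.1]; exact hW
  have step_down : ∀ j, 1 ≤ j → j < len i → p i j ∉ W →
      (j + 1 = len i ∨ p i (j + 1) ∉ W) → p i (j - 1) ∉ W := by
    intro j h1 hj hjW hnext
    refine step j (j-1) hj (by omega) (Or.inr (by omega)) hjW ?_
    intro j₀ hj₀ hidx hne
    have : j₀ = j + 1 := by omega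
    subst this
    rcases hnext with h0 | hW
    · omega
    · exact hW
  -- upward sweep from a pair of consecutive blue indices
  have sweep_up : ∀ q, q + 1 < len i → p i q ∉ W → p i (q+1) ∉ W →
      ∀ j, q ≤ j → j < len i → p i j ∉ W := by
    intro q hq hq1 hq2 j
    induction j using Nat.strong_induction_on with
    | _ j IH =>
      intro hqj hj
      rcases Nat.lt_or_ge j (q+2) with h | h
      · rcases (by omega : j = q ∨ j = q + 1) with rfl | rfl
        · exact hq1
        · exact hq2
      · have e : j - 1 + 1 = j := by omega
        have := step_up (j-1) (by omega) (IH (j-1) (by omega) (by omega) (by omega))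
          (Or.inr (by
            have e2 : j - 1 - 1 = j - 2 := by omega
            rw [e2]
            exact IH (j-2) (by omega) (by omega) (by omega)))
        rwa [e] at this
  have sweep_down : ∀ q, q < len i → p i q ∉ W → (q + 1 = len i ∨ p i (q+1) ∉ W) →
      ∀ j, j ≤ q → p i j ∉ W := by
    intro q hq hq1 hq2 j hjq
    have key : ∀ d, d ≤ q → p i (q - d) ∉ W := by
      intro d
      induction d using Nat.strong_induction_on with
      | _ d IH =>
        intro hdq
        rcases eq_or_ne d 0 with rfl | hd0
        · simpa using hq1
        · have e : q - (d-1) - 1 = q - d := by omega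
          have := step_down (q - (d-1)) (by omega) (by omega)
            (IH (d-1) (by omega) (by omega))
            (by
              rcases eq_or_ne d 1 with rfl | hd1
              · simpa using hq2
              · right
                have e2 : q - (d-1) + 1 = q - (d - 2) := by omega
                rw [e2]
                exact IH (d-2) (by omega) (by omega))
          rwa [e] at this
    have := key (q - j) (by omega)
    rwa [(by omega : q - (q - j) = j)] at this
  rcases hpicki with h0 | hlast | ⟨q, hq1, hq2, hpair⟩
  · -- pick is the first vertex
    have hbase : p i 0 ∉ W := hpickW _ (by rw [h0]; rfl)
    intro j hj
    rcases eq_or_ne (len i) 1 with h1 | h1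
    · have : j = 0 := by omega
      subst this; exact hbase
    · have h2 : p i 1 ∉ W := by
        have := step_up 0 (by omega) hbase (Or.inl rfl)
        simpa using this
      exact sweep_up 0 (by omega) hbase h2 j (by omega) hj
  · -- pick is the last vertex
    have hbase : p i (len i - 1) ∉ W := hpickW _ (by rw [hlast]; rfl)
    intro j hj
    exact sweep_down (len i - 1) (by omega) hbase (Or.inl (by omega)) j (by omega)
  · -- pick is an internal pair
    have hb1 : p i q ∉ W := hpickW _ (by rw [hpair]; left; rfl)
    have hb2 : p i (q+1) ∉ W := hpickW _ (by rw [hpair]; right; rfl)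
    intro j hj
    rcases Nat.lt_or_ge j q with h | h
    · exact sweep_down q (by omega) hb1 (Or.inr hb2) j (by omega)
    · exact sweep_up q (by omega) hb1 hb2 j h hj
end Prop1
section Leaf

variable {V : Type*} [DecidableEq V] {T : SimpleGraph V} {m : ℕ} {len : Fin m → ℕ}
  {p : Fin m → ℕ → V}

lemma leaf_path (hT : T.IsTree) (hlen : ∀ i, 1 ≤ len i)
    (hchain : ∀ i j, j + 1 < len i → T.Adj (p i j) (p i (j + 1)))
    (hinj : ∀ i j i' j', j < len i → j' < len i' → p i j = p i' j' → i = i' ∧ j = j')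
    (A : Finset (Fin m)) (hA : 2 ≤ A.card)
    (hclosed : ∀ u v, u ∈ UAx p len A → v ∈ UAx p len A → ∀ w : T.Walk u v, w.IsPath →
      ∀ z ∈ w.support, z ∈ UAx p len A) :
    ∃ i ∈ A, ∃ a x, a ∈ PVx p len i ∧ T.Adj a x ∧ x ∈ UAx p len A ∧ x ∉ PVx p len i ∧
      ∀ b y, b ∈ PVx p len i → y ∈ UAx p len A → y ∉ PVx p len i → T.Adj b y →
        b = a ∧ y = x := by
  have hC : T.Connected := hT.1
  obtain ⟨i₁, hi₁⟩ : A.Nonempty := Finset.card_pos.mp (by omega)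
  set r : V := p i₁ 0 with hr
  have hDne : ∀ k : Fin m, ((Finset.range (len k)).image fun j => T.dist r (p k j)).Nonempty :=
    fun k => Finset.Nonempty.image
      (Finset.nonempty_range_iff.mpr (Nat.one_le_iff_ne_zero.mp (hlen k))) _
  set D : Fin m → ℕ := fun k => ((Finset.range (len k)).image fun j => T.dist r (p k j)).min'
    (hDne k) with hD
  have hDmem : ∀ k, ∃ jk, jk < len k ∧ T.dist r (p k jk) = D k := by
    intro k
    have := Finset.min'_mem _ (hDne k)
    rw [Finset.mem_image] at this
    obtain ⟨j, hj, hje⟩ := this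
    exact ⟨j, Finset.mem_range.mp hj, hje⟩
  have hDle : ∀ k j, j < len k → D k ≤ T.dist r (p k j) := by
    intro k j hj
    exact Finset.min'_le _ _ (Finset.mem_image_of_mem _ (Finset.mem_range.mpr hj))
  obtain ⟨i, hiA, hmax⟩ := A.exists_max_image D ⟨i₁, hi₁⟩
  -- every cross edge from path i goes one level up
  have HC : ∀ jb y, jb < len i → T.Adj (p i jb) y → y ∈ UAx p len A → y ∉ PVx p len i →
      T.dist r y + 1 = T.dist r (p i jb) := by
    intro jb y hjb hadj hyU hyPV
    obtain ⟨wb, hwb⟩ := hC.exists_walk_length_eq_dist r (p i jb)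
    obtain ⟨wy, hwy⟩ := hC.exists_walk_length_eq_dist r y
    have hub : T.dist r y ≤ T.dist r (p i jb) + 1 := by
      have := SimpleGraph.dist_le (wb.concat hadj)
      rwa [Walk.length_concat, hwb] at this
    have hlb : T.dist r (p i jb) ≤ T.dist r y + 1 := by
      have := SimpleGraph.dist_le (wy.concat hadj.symm)
      rwa [Walk.length_concat, hwy] at this
    have hbney : p i jb ≠ y := hadj.ne
    have hneq : T.dist r y ≠ T.dist r (p i jb) := by
      intro heq
      have hpath2 : (wy.concat hadj.symm).IsPath := by
        rw [Walk.isPath_def, Walk.support_concat, List.nodup_append']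
        refine ⟨(wy.isPath_of_length_eq_dist hwy).support_nodup, List.nodup_singleton _, ?_⟩
        intro z hz hz2
        rw [List.mem_singleton] at hz2
        subst hz2
        rcases mem_shortest_cases hC wy hwy hz with h | h
        · omega
        · exact hbney h
      have heqw := tree_path_eq hT (wy.concat hadj.symm) wb hpath2
        (wb.isPath_of_length_eq_dist hwb)
      have := congrArg Walk.length heqw
      rw [Walk.length_concat, hwy, hwb] at this
      omega
    have hneq2 : T.dist r y ≠ T.dist r (p i jb) + 1 := by
      intro heq
      obtain ⟨k, hkA, jy, hjy, rfl⟩ := hyU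
      have hki : k ≠ i := by
        intro h; subst h; exact hyPV ⟨jy, hjy, rfl⟩
      obtain ⟨sk, hsk, hskD⟩ := hDmem k
      obtain ⟨ws, hws⟩ := hC.exists_walk_length_eq_dist r (p k sk)
      have hP1len : (wb.concat hadj).length = T.dist r (p k jy) := by
        rw [Walk.length_concat, hwb]; omega
      have hP1 : (wb.concat hadj).IsPath := Walk.isPath_of_length_eq_dist _ hP1len
      set w2 := ws.append (chainBetween hchain k sk jy hsk hjy) with hw2
      have heqp := tree_path_eq hT (wb.concat hadj) w2.bypass hP1 (Walk.bypass_isPath _)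
      have hbmem : p i jb ∈ (wb.concat hadj).support := by
        rw [Walk.support_concat]
        exact List.mem_append_left _ (Walk.end_mem_support _)
      rw [heqp] at hbmem
      have hbmem2 := Walk.support_bypass_subset _ hbmem
      rw [hw2, Walk.mem_support_append_iff] at hbmem2
      rcases hbmem2 with h | h
      · rcases mem_shortest_cases hC ws hws h with h' | h'
        · have h1 := hmax k hkA
          have h2 := hDle i jb hjb
          omega
        · exact hki (hinj k sk i jb hsk hjb h'.symm).1
      · obtain ⟨t, ht, hte⟩ := chainBetween_support hchain k sk jy hsk hjy _ h
        exact hki (hinj k t i jb ht hjb hte.symm).1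
    omega
  -- existence of a cross edge from path i
  obtain ⟨k₀, hk₀A, hk₀i⟩ := Finset.exists_mem_ne (s := A) (by omega) i
  have hk₀mem : ∀ j, j < len k₀ → p k₀ j ∉ PVx p len i := by
    intro j hj hmem
    obtain ⟨j', hj', hj'e⟩ := hmem
    exact hk₀i (hinj i j' k₀ j hj' hj hj'e).1.symm
  obtain ⟨w₀, hw₀⟩ := hC.exists_walk_length_eq_dist (p i 0) (p k₀ 0)
  have hw₀p : w₀.IsPath := w₀.isPath_of_length_eq_dist hw₀
  have hw₀sub : ∀ z ∈ w₀.support, z ∈ UAx p len A :=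
    hclosed _ _ ⟨i, hiA, 0, hlen i, rfl⟩ ⟨k₀, hk₀A, 0, hlen k₀, rfl⟩ w₀ hw₀p
  have hstart : p i 0 ∈ PVx p len i := ⟨0, hlen i, rfl⟩
  have hend : p k₀ 0 ∉ PVx p len i := hk₀mem 0 (hlen k₀)
  obtain ⟨dart, hdmem, hdfst, hdsnd⟩ := w₀.exists_boundary_dart (PVx p len i) hstart hend
  have hxU : dart.snd ∈ UAx p len A :=
    hw₀sub _ (w₀.dart_snd_mem_support_of_mem_darts hdmem)
  -- uniqueness of the cross edge
  have uniq : ∀ b₁ y₁ b₂ y₂, b₁ ∈ PVx p len i → y₁ ∈ UAx p len A → y₁ ∉ PVx p len i →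
      T.Adj b₁ y₁ → b₂ ∈ PVx p len i → y₂ ∈ UAx p len A → y₂ ∉ PVx p len i →
      T.Adj b₂ y₂ → b₁ = b₂ ∧ y₁ = y₂ := by
    have half : ∀ j₁ y₁ j₂ y₂ (h₁ : j₁ < len i) (h₂ : j₂ < len i),
        y₁ ∈ UAx p len A → y₁ ∉ PVx p len i → T.Adj (p i j₁) y₁ →
        y₂ ∈ UAx p len A → y₂ ∉ PVx p len i → T.Adj (p i j₂) y₂ →
        T.dist r y₂ < T.dist r y₁ ∨ y₂ = y₁ := by
      intro j₁ y₁ j₂ y₂ h₁ h₂ hy₁U hy₁P e₁ hy₂U hy₂P e₂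
      obtain ⟨s₁, hs₁⟩ := hC.exists_walk_length_eq_dist r y₁
      obtain ⟨s₂, hs₂⟩ := hC.exists_walk_length_eq_dist r y₂
      have hd₁ := HC j₁ y₁ h₁ e₁ hy₁U hy₁P
      have hd₂ := HC j₂ y₂ h₂ e₂ hy₂U hy₂P
      have hw₁len : (s₁.concat e₁.symm).length = T.dist r (p i j₁) := by
        rw [Walk.length_concat, hs₁]; omega
      have hw₁ : (s₁.concat e₁.symm).IsPath := Walk.isPath_of_length_eq_dist _ hw₁len
      have hP₂len : (s₂.concat e₂.symm).length = T.dist r (p i j₂) := by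
        rw [Walk.length_concat, hs₂]; omega
      have hP₂ : (s₂.concat e₂.symm).IsPath := Walk.isPath_of_length_eq_dist _ hP₂len
      set wfull := (s₁.concat e₁.symm).append (chainBetween hchain i j₁ j₂ h₁ h₂) with hwf
      have heqp := tree_path_eq hT (s₂.concat e₂.symm) wfull.bypass hP₂
        (Walk.bypass_isPath _)
      have hy₂mem : y₂ ∈ (s₂.concat e₂.symm).support := by
        rw [Walk.support_concat]
        exact List.mem_append_left _ (Walk.end_mem_support _)
      rw [heqp] at hy₂mem
      have hy₂mem2 := Walk.support_bypass_subset _ hy₂mem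
      rw [hwf, Walk.mem_support_append_iff] at hy₂mem2
      rcases hy₂mem2 with h | h
      · rw [Walk.support_concat, List.mem_append] at h
        rcases h with h | h
        · exact mem_shortest_cases hC s₁ hs₁ h
        · rw [List.mem_singleton] at h
          exact absurd (h ▸ hy₂P) (fun hh => hh ⟨j₁, h₁, rfl⟩)
      · obtain ⟨t, ht, hte⟩ := chainBetween_support hchain i j₁ j₂ h₁ h₂ _ h
        exact absurd ⟨t, ht, hte.symm⟩ hy₂P
    intro b₁ y₁ b₂ y₂ hb₁ hy₁U hy₁P e₁ hb₂ hy₂U hy₂P e₂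
    obtain ⟨j₁, hj₁, rfl⟩ := hb₁
    obtain ⟨j₂, hj₂, rfl⟩ := hb₂
    have c₁ := half j₁ y₁ j₂ y₂ hj₁ hj₂ hy₁U hy₁P e₁ hy₂U hy₂P e₂
    have c₂ := half j₂ y₂ j₁ y₁ hj₂ hj₁ hy₂U hy₂P e₂ hy₁U hy₁P e₁
    have hyy : y₁ = y₂ := by
      rcases c₁ with h | h
      · rcases c₂ with h' | h'
        · omega
        · exact h'
      · exact h.symm
    subst hyy
    refine ⟨?_, rfl⟩
    by_contra hbne
    have hjne : j₁ ≠ j₂ := fun h => hbne (congrArg (p i) h)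
    have hQ₂ : (Walk.cons e₁ (Walk.cons e₂.symm Walk.nil)).IsPath := by
      rw [Walk.cons_isPath_iff, Walk.cons_isPath_iff]
      refine ⟨⟨Walk.IsPath.nil, by simp [e₂.ne']⟩, ?_⟩
      simp only [Walk.support_cons, Walk.support_nil, List.mem_cons, List.mem_singleton]
      push_neg
      exact ⟨e₁.ne, hbne, by simp⟩
    have heqq := tree_path_eq hT (chainBetween hchain i j₁ j₂ hj₁ hj₂)
      (Walk.cons e₁ (Walk.cons e₂.symm Walk.nil))
      (chainBetween_isPath hchain hinj i j₁ j₂ hj₁ hj₂) hQ₂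
    have : y₁ ∈ (chainBetween hchain i j₁ j₂ hj₁ hj₂).support := by
      rw [heqq]
      simp
    obtain ⟨t, ht, hte⟩ := chainBetween_support hchain i j₁ j₂ hj₁ hj₂ _ this
    exact hy₁P ⟨t, ht, hte.symm⟩
  refine ⟨i, hiA, dart.fst, dart.snd, hdfst, dart.adj, hxU, hdsnd, ?_⟩
  intro b y hb hyU hyP hadj
  exact uniq b y dart.fst dart.snd hb hyU hyP hadj hdfst hxU hdsnd dart.adj
end Leaf
section Key

variable {V : Type*} [DecidableEq V] {T : SimpleGraph V} {m : ℕ} {len : Fin m → ℕ}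
  {p : Fin m → ℕ → V}

lemma key_lemma (hT : T.IsTree) (hlen : ∀ i, 1 ≤ len i)
    (hchain : ∀ i j, j + 1 < len i → T.Adj (p i j) (p i (j + 1)))
    (hinj : ∀ i j i' j', j < len i → j' < len i' → p i j = p i' j' → i = i' ∧ j = j')
    (pick : Fin m → Set V)
    (hpick : ∀ i, pick i = {p i 0} ∨ pick i = {p i (len i - 1)} ∨
      ∃ j, 1 ≤ j ∧ j + 1 ≤ len i - 2 ∧ pick i = {p i j, p i (j + 1)}) :
    ∀ (A : Finset (Fin m)) (W : Set V),
    (∀ u v, u ∈ UAx p len A → v ∈ UAx p len A → ∀ w : T.Walk u v, w.IsPath →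
      ∀ z ∈ w.support, z ∈ UAx p len A) →
    W ⊆ UAx p len A →
    (∀ i ∈ A, ∀ s ∈ pick i, s ∉ W) →
    (∀ v, v ∈ UAx p len A → v ∉ W → ∀ w ∈ W, T.Adj v w →
      ∃ w', w' ∈ W ∧ w' ≠ w ∧ T.Adj v w') →
    W = ∅ := by
  intro A
  induction A using Finset.strongInduction with
  | _ A IH =>
    intro W hclosed hWU hpickW fort
    by_contra hWne
    obtain ⟨w₀, hw₀⟩ := Set.nonempty_iff_ne_empty.mpr hWne
    obtain ⟨i₀, hi₀A, ji₀, hji₀, hji₀e⟩ := hWU hw₀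
    rcases Nat.lt_or_ge A.card 2 with hcard | hcard
    · -- a single path
      have hA1 : ∀ k ∈ A, k = i₀ := by
        intro k hk
        have hc1 : A.card = 1 := by
          have : 0 < A.card := Finset.card_pos.mpr ⟨i₀, hi₀A⟩
          omega
        obtain ⟨a, ha⟩ := Finset.card_eq_one.mp hc1
        rw [ha, Finset.mem_singleton] at hk
        have := hi₀A
        rw [ha, Finset.mem_singleton] at this
        rw [hk, this]
      have hext : ∀ j, j < len i₀ → ∀ y, T.Adj (p i₀ j) y →
          (∀ j', j' < len i₀ → y ≠ p i₀ j') → y ∉ W := by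
        intro j hj y hadj hoff hyW
        obtain ⟨k, hkA, jk, hjk, hjke⟩ := hWU hyW
        have := hA1 k hkA
        subst this
        exact hoff jk hjk hjke.symm
      have hall := propagation hT hlen hchain hinj W A i₀ hi₀A fort hext pick
        (hpick i₀) (hpickW i₀ hi₀A)
      exact hall ji₀ hji₀ (hji₀e ▸ hw₀)
    · -- at least two paths: find a leaf path and recurse
      obtain ⟨i, hiA, a, x, haPV, haxAdj, hxU, hxPV, uniq⟩ :=
        leaf_path hT hlen hchain hinj A hcard hclosed
      set A' := A.erase i with hA'
      have hA'ss : A' ⊂ A := Finset.erase_ssubset hiA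
      have hUA' : ∀ v, v ∈ UAx p len A' ↔ v ∈ UAx p len A ∧ v ∉ PVx p len i := by
        intro v
        constructor
        · rintro ⟨k, hkA', hv⟩
          have hk := Finset.mem_of_mem_erase hkA'
          have hkne : k ≠ i := Finset.ne_of_mem_erase hkA'
          refine ⟨⟨k, hk, hv⟩, ?_⟩
          rintro ⟨j', hj', hj'e⟩
          obtain ⟨jk, hjk, hjke⟩ := hv
          exact hkne (hinj k jk i j' hjk hj' (hjke.trans hj'e.symm)).1
        · rintro ⟨⟨k, hkA, hv⟩, hnPV⟩
          refine ⟨k, Finset.mem_erase.mpr ⟨?_, hkA⟩, hv⟩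
          rintro rfl
          exact hnPV hv
      have hclosed' : ∀ u v, u ∈ UAx p len A' → v ∈ UAx p len A' → ∀ w : T.Walk u v,
          w.IsPath → ∀ z ∈ w.support, z ∈ UAx p len A' := by
        intro u v hu hv w hw z hz
        have huA := ((hUA' u).mp hu).1
        have hvA := ((hUA' v).mp hv).1
        have hupv := ((hUA' u).mp hu).2
        have hvpv := ((hUA' v).mp hv).2
        have hzA : z ∈ UAx p len A := hclosed u v huA hvA w hw z hz
        rw [hUA' z]
        refine ⟨hzA, ?_⟩
        intro hzPV
        have ht1p : (w.takeUntil z hz).IsPath := hw.takeUntil hz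
        have ht2p : (w.dropUntil z hz).IsPath := hw.dropUntil hz
        obtain ⟨d1, hd1mem, hd1f, hd1s⟩ :=
          (w.takeUntil z hz).reverse.exists_boundary_dart (PVx p len i) hzPV hupv
        have hd1ss : d1.snd ∈ (w.takeUntil z hz).support := by
          have := (w.takeUntil z hz).reverse.dart_snd_mem_support_of_mem_darts hd1mem
          rwa [Walk.support_reverse, List.mem_reverse] at this
        have hd1sU : d1.snd ∈ UAx p len A :=
          hclosed u v huA hvA w hw _ (w.support_takeUntil_subset hz hd1ss)
        have hx1 : x ∈ (w.takeUntil z hz).support :=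
          (uniq d1.fst d1.snd hd1f hd1sU hd1s d1.adj).2 ▸ hd1ss
        obtain ⟨d2, hd2mem, hd2f, hd2s⟩ :=
          (w.dropUntil z hz).exists_boundary_dart (PVx p len i) hzPV hvpv
        have hd2ss : d2.snd ∈ (w.dropUntil z hz).support :=
          (w.dropUntil z hz).dart_snd_mem_support_of_mem_darts hd2mem
        have hd2sU : d2.snd ∈ UAx p len A :=
          hclosed u v huA hvA w hw _ (w.support_dropUntil_subset hz hd2ss)
        have hx2 : x ∈ (w.dropUntil z hz).support :=
          (uniq d2.fst d2.snd hd2f hd2sU hd2s d2.adj).2 ▸ hd2ss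
        have hnodup := hw.support_nodup
        rw [← Walk.take_spec w hz, Walk.support_append] at hnodup
        have hx2t : x ∈ (w.dropUntil z hz).support.tail := by
          rw [Walk.support_eq_cons] at hx2
          rcases List.mem_cons.mp hx2 with h | h
          · exact absurd (h ▸ hzPV) hxPV
          · exact h
        exact (List.disjoint_right.mp (List.nodup_append'.mp hnodup).2.2 hx2t) hx1
      by_cases hxW : x ∈ W
      · -- x is white: recurse with W minus path i (which contains x)
        have hsub : W \ PVx p len i ⊆ UAx p len A' := by
          intro v hv
          rw [hUA' v]
          exact ⟨hWU hv.1, hv.2⟩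
        have hpick' : ∀ k ∈ A', ∀ s ∈ pick k, s ∉ W \ PVx p len i := by
          intro k hk s hs hsw
          exact hpickW k (Finset.mem_of_mem_erase hk) s hs hsw.1
        have fort' : ∀ v, v ∈ UAx p len A' → v ∉ W \ PVx p len i →
            ∀ w1 ∈ W \ PVx p len i, T.Adj v w1 →
            ∃ w', w' ∈ W \ PVx p len i ∧ w' ≠ w1 ∧ T.Adj v w' := by
          intro v hvU' hvW' w1 hw1 hadj
          have hvA := ((hUA' v).mp hvU').1
          have hvPV := ((hUA' v).mp hvU').2
          have hvW : v ∉ W := fun h => hvW' ⟨h, hvPV⟩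
          obtain ⟨w', hw'W, hw'ne, hw'adj⟩ := fort v hvA hvW w1 hw1.1 hadj
          refine ⟨w', ⟨hw'W, ?_⟩, hw'ne, hw'adj⟩
          intro hw'PV
          have := (uniq w' v hw'PV hvA hvPV hw'adj.symm).2
          exact hvW (this ▸ hxW)
        have hW' := IH A' hA'ss (W \ PVx p len i) hclosed' hsub hpick' fort'
        rw [Set.eq_empty_iff_forall_notMem] at hW'
        exact hW' x ⟨hxW, hxPV⟩
      · -- x is blue: path i is entirely blue, recurse with the same W
        have hext : ∀ j, j < len i → ∀ y, T.Adj (p i j) y →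
            (∀ j', j' < len i → y ≠ p i j') → y ∉ W := by
          intro j hj y hadj hoff hyW
          have hyU : y ∈ UAx p len A := hWU hyW
          have hyPV : y ∉ PVx p len i := by
            rintro ⟨j', hj', hj'e⟩
            exact hoff j' hj' hj'e.symm
          have := (uniq (p i j) y ⟨j, hj, rfl⟩ hyU hyPV hadj).2
          exact hxW (this ▸ hyW)
        have hblue := propagation hT hlen hchain hinj W A i hiA fort hext pick
          (hpick i) (hpickW i hiA)
        have hsub : W ⊆ UAx p len A' := by
          intro v hv
          rw [hUA' v]
          refine ⟨hWU hv, ?_⟩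
          rintro ⟨j, hj, hje⟩
          exact hblue j hj (hje ▸ hv)
        have hpick' : ∀ k ∈ A', ∀ s ∈ pick k, s ∉ W := by
          intro k hk s hs
          exact hpickW k (Finset.mem_of_mem_erase hk) s hs
        have fort' : ∀ v, v ∈ UAx p len A' → v ∉ W → ∀ w1 ∈ W, T.Adj v w1 →
            ∃ w', w' ∈ W ∧ w' ≠ w1 ∧ T.Adj v w' := by
          intro v hvU' hvW w1 hw1 hadj
          exact fort v ((hUA' v).mp hvU').1 hvW w1 hw1 hadj
        exact hWne (IH A' hA'ss W hclosed' hsub hpick' fort')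

end Key

/-- Given any path cover of a tree `T` (a family of `m` vertex-disjoint
induced paths covering all vertices, the `i`-th path having `len i` vertices
`p i 0, …, p i (len i - 1)`), the set `S` formed by choosing from each path either one
of its end vertices or a pair of adjacent internal vertices is a zero forcing set. -/
theorem pathcover_choice_zfs {V : Type*} [Fintype V] (T : SimpleGraph V)
    (hT : T.IsTree) (m : ℕ) (len : Fin m → ℕ) (hlen : ∀ i, 1 ≤ len i)
    (p : Fin m → ℕ → V)
    (hchain : ∀ i j, j + 1 < len i → T.Adj (p i j) (p i (j + 1)))
    (hinj : ∀ i j i' j', j < len i → j' < len i' → p i j = p i' j' → i = i' ∧ j = j')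
    (hcover : ∀ v, ∃ i j, j < len i ∧ p i j = v)
    (pick : Fin m → Set V)
    (hpick : ∀ i, pick i = {p i 0} ∨ pick i = {p i (len i - 1)} ∨
      ∃ j, 1 ≤ j ∧ j + 1 ≤ len i - 2 ∧ pick i = {p i j, p i (j + 1)}) :
    IsZFS T (⋃ i, pick i) := by
  classical
  set S : Set V := ⋃ i, pick i with hS
  suffices h : {v : V | ¬ Forced T S v} = ∅ by
    intro v
    by_contra hv
    rw [Set.eq_empty_iff_forall_notMem] at h
    exact h v hv
  apply key_lemma hT hlen hchain hinj pick hpick Finset.univ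
  · intro u v hu hv w hw z hz
    obtain ⟨i, j, hj, hje⟩ := hcover z
    exact ⟨i, Finset.mem_univ i, j, hj, hje⟩
  · intro v hv
    obtain ⟨i, j, hj, hje⟩ := hcover v
    exact ⟨i, Finset.mem_univ i, j, hj, hje⟩
  · intro i _ s hs hsW
    exact hsW (Forced.init (Set.mem_iUnion.mpr ⟨i, hs⟩))
  · intro v hvU hvW w hw hadj
    by_contra hcon
    push_neg at hcon
    have hforce : ∀ x, T.Adj v x → x ≠ w → Forced T S x := by
      intro x hx hxw
      by_contra hxF
      exact hcon x hxF hxw hx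
    have hvF : Forced T S v := not_not.mp hvW
    exact hw (Forced.force hvF hadj hforce)
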